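/- If G is a square graph and H is any graph with at least one vertex, then the Cartesian product G □ H is a square. -/

import Mathlib

open SimpleGraph

/-- Butterfly involution data: `φ` is an involutive automorphism of `G`, with nonempty
fixed set and nonempty non-fixed set, the common-neighbor condition, and a partition
`A0 ∪ A1` of the non-fixed vertices with no crossing edges, swapped by `φ`. -/
def ButterflyData {V : Type*} (G : SimpleGraph V) (phi : G ≃g G) (A0 A1 : Set V) : Prop :=
  Function.Involutive phi ∧
  (∃ v, phi v = v) ∧ (∃ v, phi v ≠ v) ∧
  (∀ u : V, phi u ≠ u →
    G.neighborSet u ∩ G.neighborSet (phi u) = G.neighborSet u ∩ {v | phi v = v}) ∧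
  A0 ∪ A1 = {v | phi v ≠ v} ∧ Disjoint A0 A1 ∧
  (∀ a ∈ A0, ∀ b ∈ A1, ¬ G.Adj a b) ∧
  (∀ a ∈ A0, phi a ∈ A1) ∧ (∀ a ∈ A1, phi a ∈ A0)

/-- A graph is a square (in the gluing algebra) iff it admits a butterfly involution. -/
def IsSquareGraph {V : Type*} (G : SimpleGraph V) : Prop :=
  ∃ (phi : G ≃g G) (A0 A1 : Set V), ButterflyData G phi A0 A1

/-- Lift an automorphism of `G` to one of `G □ H` acting on the first coordinate. -/
def boxPhi {α β : Type*} (G : SimpleGraph α) (H : SimpleGraph β) (phi : G ≃g G) :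
    (G □ H) ≃g (G □ H) where
  toEquiv := Equiv.prodCongr phi.toEquiv (Equiv.refl β)
  map_rel_iff' := by
    intro x y
    exact or_congr (and_congr phi.map_adj_iff Iff.rfl)
      (and_congr Iff.rfl phi.toEquiv.apply_eq_iff_eq)

@[simp] lemma boxPhi_apply {α β : Type*} (G : SimpleGraph α) (H : SimpleGraph β)
    (phi : G ≃g G) (p : α × β) : boxPhi G H phi p = (phi p.1, p.2) := rfl

theorem stmt15 {α β : Type*} [Fintype α] [Fintype β] (G : SimpleGraph α)
    (H : SimpleGraph β) (hG : IsSquareGraph G) (hβ : Nonempty β) :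
    IsSquareGraph (G □ H) := by
  obtain ⟨phi, A0, A1, hinv, ⟨f, hf⟩, ⟨m, hm⟩, hnb, hpart, hdisj, hcross, h01, h10⟩ := hG
  obtain ⟨b⟩ := hβ
  refine ⟨boxPhi G H phi, A0 ×ˢ Set.univ, A1 ×ˢ Set.univ,
    ?_, ?_, ?_, ?_, ?_, ?_, ?_, ?_, ?_⟩
  · intro ⟨g, h⟩
    simp [hinv g]
  · exact ⟨(f, b), by simp [hf]⟩
  · exact ⟨(m, b), by simp [hm]⟩
  · rintro ⟨g, h⟩ hne
    have hg : phi g ≠ g := by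
      intro hgg; exact hne (by simp [hgg])
    have key := Set.ext_iff.mp (hnb g hg)
    ext ⟨v, w⟩
    have key' := key v
    simp only [Set.mem_inter_iff, mem_neighborSet, Set.mem_setOf_eq] at key'
    simp only [Set.mem_inter_iff, mem_neighborSet, boxProd_adj, Set.mem_setOf_eq,
      boxPhi_apply, Prod.mk.injEq]
    constructor
    · rintro ⟨h1 | h1, h2 | h2⟩
      · exact ⟨Or.inl h1, (key'.mp ⟨h1.1, h2.1⟩).2, trivial⟩
      · exact (H.loopless.irrefl w (h1.2 ▸ h2.1)).elim
      · exact (H.loopless.irrefl w (h2.2 ▸ h1.1)).elim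
      · exact absurd (h2.2.trans h1.2.symm) hg
    · rintro ⟨h1 | ⟨hHw, rfl⟩, hv, -⟩
      · exact ⟨Or.inl h1, Or.inl ⟨(key'.mpr ⟨h1.1, hv⟩).2, h1.2⟩⟩
      · exact absurd hv hg
  · ext ⟨g, h⟩
    have := Set.ext_iff.mp hpart g
    simp only [Set.mem_union, Set.mem_prod, Set.mem_univ, and_true, Set.mem_setOf_eq,
      boxPhi_apply, ne_eq, Prod.mk.injEq, not_and] at *
    exact this
  · rw [Set.disjoint_left]
    rintro ⟨g, h⟩ hg hg'
    exact Set.disjoint_left.mp hdisj hg.1 hg'.1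
  · rintro ⟨g, h⟩ hg ⟨g', h'⟩ hg' hadj
    rcases hadj with ⟨ha, _⟩ | ⟨_, heq⟩
    · exact hcross g hg.1 g' hg'.1 ha
    · exact Set.disjoint_left.mp hdisj hg.1 (heq ▸ hg'.1)
  · rintro ⟨g, h⟩ hg
    exact ⟨h01 g hg.1, trivial⟩
  · rintro ⟨g, h⟩ hg
    exact ⟨h10 g hg.1, trivial⟩
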